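/- Let g, h ∈ SL₂(ℝ) with g·i ≠ i and gh·i ≠ i, and suppose ‖h‖ ≤ ‖g‖. Then |θ_g − θ_{gh}| ≤ π/2. -/

import Mathlib

open Matrix MeasureTheory Real Filter Topology
open scoped MatrixGroups Pointwise

noncomputable section

/-- `SL(2,ℝ)` as the special linear group of 2×2 real matrices. -/
abbrev SL2R := Matrix.SpecialLinearGroup (Fin 2) ℝ

instance : TopologicalSpace SL2R :=
  show TopologicalSpace {A : Matrix (Fin 2) (Fin 2) ℝ // A.det = 1} from inferInstance

instance : MeasurableSpace SL2R := borel SL2R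

/-- Squared Frobenius norm `‖g‖² = a² + b² + c² + d²`. -/
def fnormSq (g : SL2R) : ℝ :=
  (g : Matrix (Fin 2) (Fin 2) ℝ) 0 0 ^ 2 + (g : Matrix (Fin 2) (Fin 2) ℝ) 0 1 ^ 2
    + (g : Matrix (Fin 2) (Fin 2) ℝ) 1 0 ^ 2 + (g : Matrix (Fin 2) (Fin 2) ℝ) 1 1 ^ 2

/-- Frobenius norm `‖g‖`. -/
def fnorm (g : SL2R) : ℝ := Real.sqrt (fnormSq g)

/-- The angle `θ_g = arg((g·i − i)/(g·i + i)) ∈ (−π, π]`; equals `0` when `g·i = i`. -/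
def theta (g : SL2R) : ℝ :=
  Complex.arg ((((g • UpperHalfPlane.I : UpperHalfPlane) : ℂ) - Complex.I)
    / (((g • UpperHalfPlane.I : UpperHalfPlane) : ℂ) + Complex.I))

/-- Distance between two angles: the distance from `a − b` to the nearest element of `2πℤ`. -/
def angDist (a b : ℝ) : ℝ := |((a - b : ℝ) : Real.Angle).toReal|

/-- Inverse hyperbolic cosine. -/
def arccosh (x : ℝ) : ℝ := Real.log (x + Real.sqrt (x ^ 2 - 1))

/-- `ℓ(M) = arccosh(‖M‖²/2)`, the hyperbolic distance from `i` to `M·i`. -/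
def ell (M : SL2R) : ℝ := arccosh (fnormSq M / 2)

/-- The pair-correlation density building block `f_ξ(ℓ)`. -/
def fxi (ξ l : ℝ) : ℝ :=
  if Real.sinh l ≤ ξ then 2 / ξ ^ 2 * l
  else if 2 * Real.sinh (l / 2) ≤ ξ then
    2 / ξ ^ 2 * (l + Real.log (1 + ξ ^ 2)
      - 2 * Real.log (Real.cosh l + Real.sqrt (Real.sinh l ^ 2 - ξ ^ 2)))
  else 2 / ξ ^ 2 * (l - Real.log (Real.cosh l + Real.sqrt (Real.sinh l ^ 2 - ξ ^ 2)))

/-- The rotation matrix `k_φ ∈ SL(2,ℝ)`. -/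
def kMat (φ : ℝ) : SL2R :=
  ⟨!![Real.cos (φ / 2), Real.sin (φ / 2); -Real.sin (φ / 2), Real.cos (φ / 2)], by
    rw [Matrix.det_fin_two_of]
    linear_combination Real.sin_sq_add_cos_sq (φ / 2)⟩

/-- The diagonal matrix `a_t ∈ SL(2,ℝ)`. -/
def aMat (t : ℝ) : SL2R :=
  ⟨!![Real.exp (t / 2), 0; 0, Real.exp (-t / 2)], by
    rw [Matrix.det_fin_two_of, ← Real.exp_add]
    norm_num
    ring⟩

def ent (g : SL2R) (i j : Fin 2) : ℝ := (g : Matrix (Fin 2) (Fin 2) ℝ) i j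

def Nc (g : SL2R) : ℂ :=
  ((ent g 0 1 + ent g 1 0 : ℝ) : ℂ) + ((ent g 0 0 - ent g 1 1 : ℝ) : ℂ) * Complex.I

def Dc (g : SL2R) : ℂ :=
  ((ent g 0 1 - ent g 1 0 : ℝ) : ℂ) + ((ent g 0 0 + ent g 1 1 : ℝ) : ℂ) * Complex.I

lemma smul_I_coe (g : SL2R) :
    ((g • UpperHalfPlane.I : UpperHalfPlane) : ℂ)
      = ((ent g 0 0 : ℂ) * Complex.I + (ent g 0 1 : ℂ)) /
        ((ent g 1 0 : ℂ) * Complex.I + (ent g 1 1 : ℂ)) := by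
  rw [UpperHalfPlane.specialLinearGroup_apply]
  simp [ent, UpperHalfPlane.coe_I]

lemma den_ne (g : SL2R) : ((ent g 1 0 : ℂ) * Complex.I + (ent g 1 1 : ℂ)) ≠ 0 := by
  intro h
  have h1 : ent g 1 1 = 0 ∧ ent g 1 0 = 0 := by
    constructor <;> [have := congrArg Complex.re h; have := congrArg Complex.im h] <;>
      simpa using this
  have hd : (g : Matrix (Fin 2) (Fin 2) ℝ).det = 1 := g.2
  rw [Matrix.det_fin_two] at hd
  simp only [ent] at h1
  rw [h1.1, h1.2] at hd
  simp at hd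

lemma Dne (g : SL2R) : Dc g ≠ 0 := by
  intro h
  have h1 : ent g 0 1 - ent g 1 0 = 0 ∧ ent g 0 0 + ent g 1 1 = 0 := by
    constructor <;> [have := congrArg Complex.re h; have := congrArg Complex.im h] <;>
      simpa [Dc] using this
  have hd : (g : Matrix (Fin 2) (Fin 2) ℝ).det = 1 := g.2
  rw [Matrix.det_fin_two] at hd
  simp only [ent] at h1
  have ha : (g : Matrix (Fin 2) (Fin 2) ℝ) 1 1 = -(g : Matrix (Fin 2) (Fin 2) ℝ) 0 0 := by
    linarith [h1.2]
  have hc : (g : Matrix (Fin 2) (Fin 2) ℝ) 1 0 = (g : Matrix (Fin 2) (Fin 2) ℝ) 0 1 := by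
    linarith [h1.1]
  rw [ha, hc] at hd
  nlinarith [sq_nonneg ((g : Matrix (Fin 2) (Fin 2) ℝ) 0 0),
    sq_nonneg ((g : Matrix (Fin 2) (Fin 2) ℝ) 0 1)]

lemma plusI_ne (g : SL2R) : ((g • UpperHalfPlane.I : UpperHalfPlane) : ℂ) + Complex.I ≠ 0 := by
  intro h
  have h2 : ((g • UpperHalfPlane.I : UpperHalfPlane) : ℂ).im + 1 = 0 := by
    simpa using congrArg Complex.im h
  have h4 : 0 < ((g • UpperHalfPlane.I : UpperHalfPlane) : ℂ).im :=
    (g • UpperHalfPlane.I : UpperHalfPlane).2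
  linarith

lemma cayley_eq (g : SL2R) :
    (((g • UpperHalfPlane.I : UpperHalfPlane) : ℂ) - Complex.I)
      / (((g • UpperHalfPlane.I : UpperHalfPlane) : ℂ) + Complex.I) = Nc g / Dc g := by
  have hY := plusI_ne g
  rw [smul_I_coe] at hY ⊢
  rw [div_eq_div_iff hY (Dne g)]
  simp only [Nc, Dc]
  have hB := den_ne g
  rw [div_add' _ _ _ hB, div_sub' hB, div_mul_eq_mul_div, mul_div_assoc', div_left_inj' hB]
  push_cast
  linear_combination (-(2 * (ent g 0 0 : ℂ) * (ent g 1 0 : ℂ)) * Complex.I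
    - 2 * (ent g 0 1 : ℂ) * (ent g 1 0 : ℂ)) * Complex.I_sq

lemma theta_eq (g : SL2R) : theta g = Complex.arg (Nc g / Dc g) := by
  rw [theta, cayley_eq]

lemma Nne (g : SL2R) (hg : g • UpperHalfPlane.I ≠ UpperHalfPlane.I) : Nc g ≠ 0 := by
  have hz : ((g • UpperHalfPlane.I : UpperHalfPlane) : ℂ) - Complex.I ≠ 0 := by
    intro h
    apply hg
    apply UpperHalfPlane.ext
    rw [sub_eq_zero] at h
    simpa [UpperHalfPlane.coe_I] using h
  have := div_ne_zero hz (plusI_ne g)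
  rw [cayley_eq] at this
  intro h
  rw [h, zero_div] at this
  exact this rfl

lemma key_ineq (a b c d p q r s : ℝ) (hdg : a*d - b*c = 1) (hdh : p*s - q*r = 1)
    (hHG : p^2+q^2+r^2+s^2 ≤ a^2+b^2+c^2+d^2) :
    0 ≤ ((b+c)*((a*q+b*s)-(c*p+d*r)) - (a-d)*((a*p+b*r)+(c*q+d*s)))
          * ((b-c)*((a*q+b*s)+(c*p+d*r)) - (a+d)*((a*p+b*r)-(c*q+d*s)))
        + ((b+c)*((a*p+b*r)+(c*q+d*s)) + (a-d)*((a*q+b*s)-(c*p+d*r)))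
          * ((b-c)*((a*p+b*r)-(c*q+d*s)) + (a+d)*((a*q+b*s)+(c*p+d*r))) := by
  have hd2 : (a*p+b*r)*(c*q+d*s) - (a*q+b*s)*(c*p+d*r) = 1 := by
    linear_combination (p*s - q*r) * hdg + hdh
  have hK2 : 2 ≤ (a*p+b*r)^2 + (a*q+b*s)^2 + (c*p+d*r)^2 + (c*q+d*s)^2 := by
    nlinarith [sq_nonneg ((a*p+b*r) - (c*q+d*s)), sq_nonneg ((a*q+b*s) + (c*p+d*r))]
  have hG0 : (0:ℝ) ≤ a^2+b^2+c^2+d^2 := by positivity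
  have key : ((b+c)*((a*q+b*s)-(c*p+d*r)) - (a-d)*((a*p+b*r)+(c*q+d*s)))
          * ((b-c)*((a*q+b*s)+(c*p+d*r)) - (a+d)*((a*p+b*r)-(c*q+d*s)))
        + ((b+c)*((a*p+b*r)+(c*q+d*s)) + (a-d)*((a*q+b*s)-(c*p+d*r)))
          * ((b-c)*((a*p+b*r)-(c*q+d*s)) + (a+d)*((a*q+b*s)+(c*p+d*r)))
      = (a^2+b^2+c^2+d^2) * ((a*p+b*r)^2 + (a*q+b*s)^2 + (c*p+d*r)^2 + (c*q+d*s)^2)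
        - 2*(p^2+q^2+r^2+s^2)*(a*d-b*c)^2 := by ring
  rw [key, hdg]
  nlinarith [mul_nonneg hG0 (by linarith :
    (0:ℝ) ≤ (a*p+b*r)^2 + (a*q+b*s)^2 + (c*p+d*r)^2 + (c*q+d*s)^2 - 2)]

/-- Lemma 2.3: if `‖h‖ ≤ ‖g‖` then `|θ_g − θ_{gh}| ≤ π/2`. -/
theorem angle_diff_le_pi_div_two (g h : SL2R)
    (hg : g • UpperHalfPlane.I ≠ UpperHalfPlane.I)
    (hgh : (g * h) • UpperHalfPlane.I ≠ UpperHalfPlane.I)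
    (hn : fnorm h ≤ fnorm g) :
    angDist (theta g) (theta (g * h)) ≤ π / 2 := by
  have hu0 : Nc g / Dc g ≠ 0 := div_ne_zero (Nne g hg) (Dne g)
  have hv0 : Nc (g * h) / Dc (g * h) ≠ 0 := div_ne_zero (Nne _ hgh) (Dne _)
  rw [angDist, theta_eq, theta_eq]
  have hang : ((Complex.arg (Nc g / Dc g) - Complex.arg (Nc (g * h) / Dc (g * h)) : ℝ)
      : Real.Angle) = (Complex.arg ((Nc g / Dc g) / (Nc (g * h) / Dc (g * h))) : Real.Angle) := by
    rw [Complex.arg_div_coe_angle hu0 hv0, Real.Angle.coe_sub]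
  rw [hang, Complex.arg_coe_angle_toReal_eq_arg, Complex.abs_arg_le_pi_div_two_iff]
  have huv : (Nc g / Dc g) / (Nc (g * h) / Dc (g * h))
      = (Nc g * Dc (g * h)) / (Dc g * Nc (g * h)) := by
    field_simp
  rw [huv, Complex.div_re, ← add_div]
  apply div_nonneg _ (Complex.normSq_nonneg _)
  have e : ∀ i j, ent (g * h) i j
      = ent g i 0 * ent h 0 j + ent g i 1 * ent h 1 j := by
    intro i j
    simp [ent, Matrix.mul_apply, Fin.sum_univ_two]
  have hdg : ent g 0 0 * ent g 1 1 - ent g 0 1 * ent g 1 0 = 1 := by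
    have := g.2; rw [Matrix.det_fin_two] at this; simpa [ent] using this
  have hdh : ent h 0 0 * ent h 1 1 - ent h 0 1 * ent h 1 0 = 1 := by
    have := h.2; rw [Matrix.det_fin_two] at this; simpa [ent] using this
  have hHG : ent h 0 0 ^ 2 + ent h 0 1 ^ 2 + ent h 1 0 ^ 2 + ent h 1 1 ^ 2
      ≤ ent g 0 0 ^ 2 + ent g 0 1 ^ 2 + ent g 1 0 ^ 2 + ent g 1 1 ^ 2 := by
    have h1 : 0 ≤ fnormSq h := by unfold fnormSq; positivity
    have h2 : 0 ≤ fnormSq g := by unfold fnormSq; positivity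
    have h3 := pow_le_pow_left₀ (Real.sqrt_nonneg (fnormSq h)) hn 2
    simp only [fnorm] at h3
    rw [Real.sq_sqrt h1, Real.sq_sqrt h2] at h3
    exact h3
  have key := key_ineq (ent g 0 0) (ent g 0 1) (ent g 1 0) (ent g 1 1)
    (ent h 0 0) (ent h 0 1) (ent h 1 0) (ent h 1 1) hdg hdh hHG
  simp only [Nc, Dc, Complex.mul_re, Complex.mul_im, Complex.add_re, Complex.add_im,
    Complex.ofReal_re, Complex.ofReal_im, Complex.I_re, Complex.I_im, e,
    zero_mul, mul_zero, zero_add, add_zero, mul_one, sub_zero]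
  convert key using 1
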